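/- For any disjoint sets of atoms B_1, B_2 ⊆ σ, any interpretation I, and any infinitary propositional formula F over σ: if B_2 is disjoint from Nnn(F) and I \ (B_1 ∪ B_2) satisfies F^I, then I \ B_1 satisfies F^I. -/
import Mathlib


/-- Infinitary propositional formulas over signature `σ`:
atoms, conjunctions and disjunctions of (index-)sets of formulas, implication. -/
inductive Formula (σ : Type) : Type 1
  | atom : σ → Formula σ
  | conj : (ι : Type) → (ι → Formula σ) → Formula σ
  | disj : (ι : Type) → (ι → Formula σ) → Formula σ
  | imp : Formula σ → Formula σ → Formula σ

namespace Formula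

variable {σ : Type}

/-- `⊥` is the empty disjunction. -/
def bot : Formula σ := Formula.disj Empty (fun e => e.elim)

/-- Binary conjunction `F ∧ G`. -/
def and (F G : Formula σ) : Formula σ := Formula.conj Bool (fun b => if b then F else G)

/-- Binary disjunction `F ∨ G`. -/
def or (F G : Formula σ) : Formula σ := Formula.disj Bool (fun b => if b then F else G)

/-- Negation `¬F` abbreviates `F → ⊥`. -/
def neg (F : Formula σ) : Formula σ := Formula.imp F bot

/-- Conjunction of a set of atoms. -/
def conjAtoms (S : Set σ) : Formula σ := Formula.conj S (fun p => Formula.atom p.val)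

/-- Satisfaction of an infinitary formula by an interpretation `I ⊆ σ`. -/
def Sat (I : Set σ) : Formula σ → Prop
  | .atom p => p ∈ I
  | .conj _ f => ∀ i, Sat I (f i)
  | .disj _ f => ∃ i, Sat I (f i)
  | .imp F G => Sat I F → Sat I G

open Classical in
/-- The reduct `F^I`. -/
noncomputable def reduct (I : Set σ) : Formula σ → Formula σ
  | .atom p => if p ∈ I then Formula.atom p else bot
  | .conj ι f => Formula.conj ι (fun i => reduct I (f i))
  | .disj ι f => Formula.disj ι (fun i => reduct I (f i))
  | .imp F G => if Sat I (Formula.imp F G) then Formula.imp (reduct I F) (reduct I G) else bot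

/-- `I` is an `A`-stable model of `F`: `I` is minimal w.r.t. `≤_A`
(`J ≤_A I` iff `J ⊆ I` and `I \ J ⊆ A`) among interpretations satisfying `F^I`. -/
def AStable (A : Set σ) (I : Set σ) (F : Formula σ) : Prop :=
  Sat I (reduct I F) ∧ ∀ J : Set σ, J ⊆ I → I \ J ⊆ A → Sat J (reduct I F) → J = I

/-- A stable model is a `σ`-stable model. -/
def Stable (I : Set σ) (F : Formula σ) : Prop := AStable Set.univ I F

/-- The strictly positive atoms `P(F)`. -/
def spos : Formula σ → Set σ
  | .atom p => {p}
  | .conj _ f => ⋃ i, spos (f i)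
  | .disj _ f => ⋃ i, spos (f i)
  | .imp _ H => spos H

/-- `F` is (syntactically) the formula `⊥`, i.e. an empty disjunction. -/
def IsBot : Formula σ → Prop
  | .disj ι _ => IsEmpty ι
  | _ => False

open Classical in
mutual
/-- Positive nonnegated atoms `Pnn(F)`. -/
noncomputable def pnn : Formula σ → Set σ
  | .atom p => {p}
  | .conj _ f => ⋃ i, pnn (f i)
  | .disj _ f => ⋃ i, pnn (f i)
  | .imp G H => if IsBot H then ∅ else nnn G ∪ pnn H

/-- Negative nonnegated atoms `Nnn(F)`. -/
noncomputable def nnn : Formula σ → Set σ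
  | .atom _ => ∅
  | .conj _ f => ⋃ i, nnn (f i)
  | .disj _ f => ⋃ i, nnn (f i)
  | .imp G H => if IsBot H then ∅ else pnn G ∪ nnn H
end

/-- The rules of a formula, as antecedent/consequent pairs. -/
def rules : Formula σ → Set (Formula σ × Formula σ)
  | .atom _ => ∅
  | .conj _ f => ⋃ i, rules (f i)
  | .disj _ f => ⋃ i, rules (f i)
  | .imp G H => insert (G, H) (rules H)

/-- Edge relation of the positive dependency graph `DG_A[F]` (vertex set `A`). -/
noncomputable def DGEdge (F : Formula σ) (A : Set σ) (p q : σ) : Prop :=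
  p ∈ A ∧ q ∈ A ∧ ∃ R ∈ rules F, p ∈ spos R.2 ∧ q ∈ pnn R.1

/-- The atoms occurring in a formula. -/
def atoms : Formula σ → Set σ
  | .atom p => {p}
  | .conj _ f => ⋃ i, atoms (f i)
  | .disj _ f => ⋃ i, atoms (f i)
  | .imp G H => atoms G ∪ atoms H

/-- `G` is a definition for the set `Q` of atoms: a conjunction of formulas
`H ∧ C^∧ → q` with `q ∈ Q`, `C ⊆ Q`, and no atom of `Q` occurring in `H`. -/
def IsDefinition (Q : Set σ) (G : Formula σ) : Prop :=
  ∃ (ι : Type) (g : ι → Formula σ), G = Formula.conj ι g ∧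
    ∀ i, ∃ (H : Formula σ) (C : Set σ) (q : σ),
      q ∈ Q ∧ C ⊆ Q ∧ (∀ p ∈ Q, p ∉ atoms H) ∧
      g i = Formula.imp (Formula.and H (conjAtoms C)) (Formula.atom q)

end Formula

section Graph

variable {V : Type*}

/-- An infinite walk in the directed graph with edge relation `E`. -/
def IsInfWalk (E : V → V → Prop) (w : ℕ → V) : Prop := ∀ i, E (w i) (w (i + 1))

/-- The partition `{P₁, P₂}` is infinitely separable: every infinite walk
visits `P₁` or `P₂` only finitely often. -/
def InfSeparable (E : V → V → Prop) (P1 P2 : Set V) : Prop :=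
  ∀ w : ℕ → V, IsInfWalk E w → {i | w i ∈ P1}.Finite ∨ {i | w i ∈ P2}.Finite

/-- `u` and `v` are in the same strongly connected component:
each is reachable from the other. -/
def SameSCC (E : V → V → Prop) (u v : V) : Prop :=
  Relation.ReflTransGen E u v ∧ Relation.ReflTransGen E v u

/-- The partition `{P₁, P₂}` is separable: every strongly connected
component is contained in `P₁` or in `P₂`. -/
def Separable (E : V → V → Prop) (P1 P2 : Set V) : Prop :=
  ∀ u v, SameSCC E u v → ((u ∈ P1 ∧ v ∈ P1) ∨ (u ∈ P2 ∧ v ∈ P2))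

end Graph

namespace Formula

variable {σ : Type}

lemma isBot_reduct {I : Set σ} {G : Formula σ} (h : IsBot G) : IsBot (reduct I G) := by
  cases G with
  | disj ι g => exact h
  | atom p => exact (h : False).elim
  | conj ι g => exact (h : False).elim
  | imp F G => exact (h : False).elim

lemma not_sat_isBot {J : Set σ} {G : Formula σ} (h : IsBot G) : ¬ Sat J G := by
  cases G with
  | disj ι g =>
    rintro ⟨i, -⟩
    exact (h : IsEmpty ι).elim i
  | atom p => exact (h : False).elim
  | conj ι g => exact (h : False).elim
  | imp F G => exact (h : False).elim

lemma not_sat_bot {J : Set σ} : ¬ Sat J (bot : Formula σ) :=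
  not_sat_isBot (by constructor; exact fun e => e.elim)

lemma sat_of_sat_reduct {I : Set σ} (F : Formula σ) :
    ∀ J : Set σ, Sat J (reduct I F) → Sat I F := by
  induction F with
  | atom p =>
    intro J h
    by_cases hp : p ∈ I
    · exact hp
    · rw [reduct, if_neg hp] at h; exact absurd h not_sat_bot
  | conj ι f ih =>
    intro J h i
    exact ih i J (h i)
  | disj ι f ih =>
    intro J h
    obtain ⟨i, hi⟩ := h
    exact ⟨i, ih i J hi⟩
  | imp F G ihF ihG =>
    intro J h
    by_cases hI : Sat I (Formula.imp F G)
    · exact hI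
    · rw [reduct, if_neg hI] at h; exact absurd h not_sat_bot

lemma key_add (I B2 : Set σ) :
    ∀ (F : Formula σ) (J K : Set σ), J ⊆ K → K \ J ⊆ B2 →
      (Disjoint B2 (nnn F) → Sat J (reduct I F) → Sat K (reduct I F)) ∧
      (Disjoint B2 (pnn F) → Sat K (reduct I F) → Sat J (reduct I F)) := by
  intro F
  induction F with
  | atom p =>
    intro J K hJK hKJ
    constructor
    · intro _ h
      by_cases hp : p ∈ I
      · rw [reduct, if_pos hp] at h ⊢; exact hJK h
      · rw [reduct, if_neg hp] at h; exact absurd h not_sat_bot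
    · intro hd h
      by_cases hp : p ∈ I
      · rw [reduct, if_pos hp] at h ⊢
        by_contra hpJ
        have hB2 : p ∈ B2 := hKJ ⟨h, hpJ⟩
        have hpnn : p ∈ pnn (Formula.atom p) := by rw [pnn]; exact rfl
        exact Set.disjoint_left.mp hd hB2 hpnn
      · rw [reduct, if_neg hp] at h; exact absurd h not_sat_bot
  | conj ι f ih =>
    intro J K hJK hKJ
    constructor
    · intro hd h i
      exact (ih i J K hJK hKJ).1 (hd.mono_right (by rw [nnn]; exact Set.subset_iUnion (fun j => nnn (f j)) i)) (h i)
    · intro hd h i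
      exact (ih i J K hJK hKJ).2 (hd.mono_right (by rw [pnn]; exact Set.subset_iUnion (fun j => pnn (f j)) i)) (h i)
  | disj ι f ih =>
    intro J K hJK hKJ
    constructor
    · rintro hd ⟨i, hi⟩
      exact ⟨i, (ih i J K hJK hKJ).1 (hd.mono_right (by rw [nnn]; exact Set.subset_iUnion (fun j => nnn (f j)) i)) hi⟩
    · rintro hd ⟨i, hi⟩
      exact ⟨i, (ih i J K hJK hKJ).2 (hd.mono_right (by rw [pnn]; exact Set.subset_iUnion (fun j => pnn (f j)) i)) hi⟩
  | imp F G ihF ihG =>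
    intro J K hJK hKJ
    by_cases hI : Sat I (Formula.imp F G)
    swap
    · constructor <;> intro _ h <;>
        (rw [reduct, if_neg hI] at h; exact absurd h not_sat_bot)
    by_cases hb : IsBot G
    · have hIG : ¬ Sat I F := fun hF => not_sat_isBot hb (hI hF)
      constructor
      · intro _ h
        rw [reduct, if_pos hI] at h ⊢
        intro hK
        exact absurd (sat_of_sat_reduct F K hK) hIG
      · intro _ h
        rw [reduct, if_pos hI] at h ⊢
        intro hJ
        exact absurd (sat_of_sat_reduct F J hJ) hIG
    · have hdn : Disjoint B2 (nnn (Formula.imp F G)) →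
          Disjoint B2 (pnn F) ∧ Disjoint B2 (nnn G) := by
        intro hd
        rw [nnn, if_neg hb] at hd
        exact ⟨hd.mono_right Set.subset_union_left, hd.mono_right Set.subset_union_right⟩
      have hdp : Disjoint B2 (pnn (Formula.imp F G)) →
          Disjoint B2 (nnn F) ∧ Disjoint B2 (pnn G) := by
        intro hd
        rw [pnn, if_neg hb] at hd
        exact ⟨hd.mono_right Set.subset_union_left, hd.mono_right Set.subset_union_right⟩
      constructor
      · intro hd h
        obtain ⟨hdF, hdG⟩ := hdn hd
        rw [reduct, if_pos hI] at h ⊢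
        intro hK
        exact (ihG J K hJK hKJ).1 hdG (h ((ihF J K hJK hKJ).2 hdF hK))
      · intro hd h
        obtain ⟨hdF, hdG⟩ := hdp hd
        rw [reduct, if_pos hI] at h ⊢
        intro hJ
        exact (ihG J K hJK hKJ).2 hdG (h ((ihF J K hJK hKJ).1 hdF hJ))

end Formula

/-- if `B₁, B₂` are disjoint, `B₂` is disjoint from `Nnn(F)`,
and `I \ (B₁ ∪ B₂) ⊨ F^I`, then `I \ B₁ ⊨ F^I`. -/
theorem sat_reduct_add_nnn_disjoint {σ : Type} (B1 B2 : Set σ)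
    (hB : Disjoint B1 B2) (I : Set σ) (F : Formula σ)
    (hnnn : Disjoint B2 (Formula.nnn F))
    (h : Formula.Sat (I \ (B1 ∪ B2)) (Formula.reduct I F)) :
    Formula.Sat (I \ B1) (Formula.reduct I F) := by
  refine (Formula.key_add I B2 F (I \ (B1 ∪ B2)) (I \ B1) ?_ ?_).1 hnnn h
  · exact fun x hx => ⟨hx.1, fun h1 => hx.2 (Set.mem_union_left _ h1)⟩
  · rintro x ⟨⟨hxI, hxB⟩, hxJ⟩
    rcases (not_and_or.mp (fun hc : x ∈ I ∧ x ∉ B1 ∪ B2 => hxJ ⟨hc.1, hc.2⟩)) with h1 | h2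
    · exact absurd hxI h1
    · rcases not_not.mp h2 with h | h
      · exact absurd h hxB
      · exact h
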